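/- arXiv:2011.01568 — 2 statements merged into one kernel-verified Lean document; each statement's English description precedes it below -/
import Mathlib

section
/- Let V̄ be a symmetric PSD matrix, P an orthogonal projection with span(V̄) ⊆ span(P), and V = V̄ + P. Then for any vector λ ∈ span(P) and any vector S ∈ span(V̄): ‖λ − V̄† S‖²_{V̄} + ‖λ‖²_P = ‖λ − V† S‖²_V + ‖S‖²_{V̄†} − ‖S‖²_{V†}, where ‖x‖²_A = xᵀ A x. -/
open Matrix

/-- The four Moore–Penrose conditions characterizing the pseudoinverse. -/
def IsMoorePenrose {n : ℕ} (A X : Matrix (Fin n) (Fin n) ℝ) : Prop :=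
  A * X * A = A ∧ X * A * X = X ∧ (A * X)ᵀ = A * X ∧ (X * A)ᵀ = X * A

/-- The squared semi-norm `‖x‖²_A = xᵀ A x` induced by a PSD matrix `A`. -/
def normSq {n : ℕ} (A : Matrix (Fin n) (Fin n) ℝ) (x : Fin n → ℝ) : ℝ :=
  x ⬝ᵥ A.mulVec x

/-- Completing-the-square identity: with `V = V̄ + P`, for `λ ∈ range P` and
`S ∈ span(V̄)`,
`‖λ − V̄† S‖²_{V̄} + ‖λ‖²_P = ‖λ − V† S‖²_V + ‖S‖²_{V̄†} − ‖S‖²_{V†}`. -/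
theorem stmt9 {n : ℕ} (Vbar P V Vbard Vd : Matrix (Fin n) (Fin n) ℝ)
    (hVbar : Vbar.PosSemidef)
    (hPsymm : Pᵀ = P) (hPidem : P * P = P)
    (hspan : P * Vbar = Vbar)
    (hV : V = Vbar + P)
    (hVbard : IsMoorePenrose Vbar Vbard)
    (hVd : IsMoorePenrose V Vd)
    (lam S : Fin n → ℝ)
    (hlam : P.mulVec lam = lam)
    (hS : ∃ y, S = Vbar.mulVec y) :
    normSq Vbar (lam - Vbard.mulVec S) + normSq P lam
      = normSq V (lam - Vd.mulVec S) + normSq Vbard S - normSq Vd S := by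
  obtain ⟨hA1, hA2, hA3, hA4⟩ := hVbard
  obtain ⟨hB1, hB2, hB3, hB4⟩ := hVd
  obtain ⟨y, hy⟩ := hS
  have hVbarSym : Vbarᵀ = Vbar := hVbar.1.eq
  have hVsym : Vᵀ = V := by
    rw [hV, transpose_add, hVbarSym, hPsymm]
  -- kernel of V is contained in kernel of P
  have hker : ∀ x : Fin n → ℝ, V.mulVec x = 0 → P.mulVec x = 0 := by
    intro x hx
    have h1 : x ⬝ᵥ V.mulVec x = 0 := by rw [hx]; simp
    have h2 : x ⬝ᵥ Vbar.mulVec x + x ⬝ᵥ P.mulVec x = 0 := by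
      rw [hV] at h1
      simpa [Matrix.add_mulVec, dotProduct_add] using h1
    have hb : 0 ≤ x ⬝ᵥ Vbar.mulVec x := by
      have := hVbar.dotProduct_mulVec_nonneg x; simpa using this
    have hp : x ⬝ᵥ P.mulVec x = (P.mulVec x) ⬝ᵥ (P.mulVec x) := by
      conv_lhs => rw [← hPidem, ← Matrix.mulVec_mulVec,
        Matrix.dotProduct_mulVec, ← Matrix.mulVec_transpose, hPsymm]
    have hp0 : 0 ≤ x ⬝ᵥ P.mulVec x := by
      rw [hp, dotProduct]
      exact Finset.sum_nonneg fun i _ => mul_self_nonneg _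
    have hzero : x ⬝ᵥ P.mulVec x = 0 := by linarith
    rw [hp] at hzero
    exact dotProduct_self_eq_zero.mp hzero
  -- V * (1 - V*Vd) = 0
  have hM0 : (1 - V * Vd) * V = 0 := by
    rw [sub_mul, one_mul, hB1, sub_self]
  have hVkill : V * (1 - V * Vd) = 0 := by
    have h2 : (V * (1 - V * Vd))ᵀ = 0 := by
      rw [transpose_mul, transpose_sub, transpose_one, hB3, hVsym, hM0]
    simpa using congrArg transpose h2
  -- P * (V*Vd) = P
  have hPM : P * (1 - V * Vd) = 0 := by
    ext i j
    have hcol : V.mulVec (fun k => (1 - V * Vd) k j) = 0 := by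
      funext i'
      have := congrFun (congrFun hVkill i') j
      simpa [Matrix.mul_apply, Matrix.mulVec, dotProduct] using this
    have := congrFun (hker _ hcol) i
    simpa [Matrix.mul_apply, Matrix.mulVec, dotProduct] using this
  have hPQ : P * (V * Vd) = P := by
    have := hPM
    rw [mul_sub, mul_one, sub_eq_zero] at this
    exact this.symm
  have hQP : (V * Vd) * P = P := by
    have : ((V * Vd) * P)ᵀ = P := by
      rw [transpose_mul, hPsymm, hB3, hPQ]
    calc (V * Vd) * P = (((V * Vd) * P)ᵀ)ᵀ := by rw [transpose_transpose]
      _ = Pᵀ := by rw [this]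
      _ = P := hPsymm
  -- vector facts
  have hPS : P.mulVec S = S := by
    rw [hy, Matrix.mulVec_mulVec, hspan]
  have hQS : (V * Vd).mulVec S = S := by
    rw [← hPS, Matrix.mulVec_mulVec, hQP, hPS]
  have hQlam : (V * Vd).mulVec lam = lam := by
    rw [← hlam, Matrix.mulVec_mulVec, hQP, hlam]
  have hVVdS : V.mulVec (Vd.mulVec S) = S := by
    rw [Matrix.mulVec_mulVec]; exact hQS
  have hVbarQS : Vbar.mulVec (Vbard.mulVec S) = S := by
    rw [hy, Matrix.mulVec_mulVec, Matrix.mulVec_mulVec, hA1]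
  -- cross terms
  have hcross1 : (Vbard.mulVec S) ⬝ᵥ Vbar.mulVec lam = S ⬝ᵥ lam := by
    rw [Matrix.dotProduct_mulVec, ← Matrix.mulVec_transpose, hVbarSym, hVbarQS]
  have hcross2 : (Vbard.mulVec S) ⬝ᵥ Vbar.mulVec (Vbard.mulVec S)
      = S ⬝ᵥ Vbard.mulVec S := by
    rw [Matrix.dotProduct_mulVec, ← Matrix.mulVec_transpose, hVbarSym, hVbarQS]
  have hcross3 : (Vd.mulVec S) ⬝ᵥ V.mulVec lam = S ⬝ᵥ lam := by
    rw [Matrix.dotProduct_mulVec, ← Matrix.mulVec_transpose, hVsym, hVVdS]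
  have hcross4 : (Vd.mulVec S) ⬝ᵥ V.mulVec (Vd.mulVec S)
      = S ⬝ᵥ Vd.mulVec S := by
    rw [Matrix.dotProduct_mulVec, ← Matrix.mulVec_transpose, hVsym, hVVdS]
  have hlamS : lam ⬝ᵥ S = S ⬝ᵥ lam := dotProduct_comm _ _
  have hlamS2 : lam ⬝ᵥ Vbar.mulVec (Vbard.mulVec S) = S ⬝ᵥ lam := by
    rw [hVbarQS, hlamS]
  have hlamS3 : lam ⬝ᵥ V.mulVec (Vd.mulVec S) = S ⬝ᵥ lam := by
    rw [hVVdS, hlamS]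
  have hSVbard : S ⬝ᵥ Vbard.mulVec S = normSq Vbard S := rfl
  -- expand everything
  simp only [normSq, Matrix.mulVec_sub, dotProduct_sub, sub_dotProduct,
    hlamS2, hlamS3, hcross1, hcross2, hcross3, hcross4]
  have hVlam : lam ⬝ᵥ V.mulVec lam = lam ⬝ᵥ Vbar.mulVec lam + lam ⬝ᵥ P.mulVec lam := by
    rw [hV, Matrix.add_mulVec, dotProduct_add]
  rw [hVlam]
  ring
end

section
/- Let V̄ be symmetric PSD, P an orthogonal projection with span(V̄) ⊆ range(P), and V = V̄ + P. Then V is invertible when restricted to range(P); in particular V† V = P and ‖V̄^{1/2} (V†)^{1/2} x‖₂ ≤ ‖x‖₂ for all x, i.e., (V†)^{1/2} V̄ (V†)^{1/2} ⪯ I. -/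
open Matrix

/-- The positive semidefinite square root of a positive semidefinite matrix
(the definition `Matrix.PosSemidef.sqrt` of the older Mathlib, removed since). -/
noncomputable def Matrix.PosSemidef.sqrt {n : Type*} [Fintype n] [DecidableEq n]
    {𝕜 : Type*} [RCLike 𝕜] [PartialOrder 𝕜] [StarOrderedRing 𝕜] {A : Matrix n n 𝕜} (hA : A.PosSemidef) : Matrix n n 𝕜 :=
  (hA.1.eigenvectorUnitary : Matrix n n 𝕜) *
    diagonal ((RCLike.ofReal : ℝ → 𝕜) ∘ (√·) ∘ hA.1.eigenvalues) *
    (star hA.1.eigenvectorUnitary : Matrix n n 𝕜)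

theorem psd_sqrt_mul_self {n : ℕ} {A : Matrix (Fin n) (Fin n) ℝ} (hA : A.PosSemidef) :
    hA.sqrt * hA.sqrt = A := by
  have hU : (star hA.1.eigenvectorUnitary : Matrix (Fin n) (Fin n) ℝ) *
      (hA.1.eigenvectorUnitary : Matrix (Fin n) (Fin n) ℝ) = 1 := by simp
  have hD : diagonal ((RCLike.ofReal : ℝ → ℝ) ∘ (√·) ∘ hA.1.eigenvalues) *
      diagonal ((RCLike.ofReal : ℝ → ℝ) ∘ (√·) ∘ hA.1.eigenvalues) =
      diagonal ((RCLike.ofReal : ℝ → ℝ) ∘ hA.1.eigenvalues) := by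
    rw [diagonal_mul_diagonal]
    congr 1
    funext i
    simp [Real.mul_self_sqrt (hA.eigenvalues_nonneg i)]
  conv_rhs => rw [hA.1.spectral_theorem, Unitary.conjStarAlgAut_apply]
  unfold Matrix.PosSemidef.sqrt
  rw [← hD]
  simp only [Matrix.mul_assoc]
  rw [← Matrix.mul_assoc (star _ : Matrix (Fin n) (Fin n) ℝ) _ _, hU, Matrix.one_mul]

theorem psd_sqrt_herm {n : ℕ} {A : Matrix (Fin n) (Fin n) ℝ} (hA : A.PosSemidef) :
    (hA.sqrt)ᴴ = hA.sqrt := by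
  unfold Matrix.PosSemidef.sqrt
  simp [conjTranspose_mul, Matrix.mul_assoc, Matrix.star_eq_conjTranspose]

/-- Uniqueness of the Moore–Penrose pseudoinverse. -/
theorem mp_unique {n : ℕ} {A X Y : Matrix (Fin n) (Fin n) ℝ}
    (hX : IsMoorePenrose A X) (hY : IsMoorePenrose A Y) : X = Y := by
  obtain ⟨hX1, hX2, hX3, hX4⟩ := hX
  obtain ⟨hY1, hY2, hY3, hY4⟩ := hY
  have h1 : A * X = A * Y := by
    calc A * X = (A * Y * A) * X := by rw [hY1]
      _ = (A * Y) * (A * X) := by simp only [Matrix.mul_assoc]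
      _ = ((A * X)ᵀ * (A * Y)ᵀ)ᵀ := by
            rw [transpose_mul, transpose_transpose, transpose_transpose]
      _ = ((A * X) * (A * Y))ᵀ := by rw [hX3, hY3]
      _ = ((A * X * A) * Y)ᵀ := by simp only [Matrix.mul_assoc]
      _ = (A * Y)ᵀ := by rw [hX1]
      _ = A * Y := hY3
  have h2 : X * A = Y * A := by
    calc X * A = X * (A * Y * A) := by rw [hY1]
      _ = (X * A) * (Y * A) := by simp only [Matrix.mul_assoc]
      _ = ((Y * A)ᵀ * (X * A)ᵀ)ᵀ := by
            rw [transpose_mul, transpose_transpose, transpose_transpose]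
      _ = ((Y * A) * (X * A))ᵀ := by rw [hX4, hY4]
      _ = (Y * (A * X * A))ᵀ := by simp only [Matrix.mul_assoc]
      _ = (Y * A)ᵀ := by rw [hX1]
      _ = Y * A := hY4
  calc X = X * A * X := hX2.symm
    _ = X * A * Y := by rw [Matrix.mul_assoc, h1, ← Matrix.mul_assoc]
    _ = Y * A * Y := by rw [h2]
    _ = Y := hY2

/-- With `V = V̄ + P`, `V` is invertible on `range P`: `V† V = P`, and
`(V†)^{1/2} V̄ (V†)^{1/2} ⪯ I`. -/
theorem stmt10 {n : ℕ} (Vbar P V Vd : Matrix (Fin n) (Fin n) ℝ)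
    (hVbar : Vbar.PosSemidef)
    (hPsymm : Pᵀ = P) (hPidem : P * P = P)
    (hspan : P * Vbar = Vbar)
    (hV : V = Vbar + P)
    (hVd : IsMoorePenrose V Vd) :
    ∃ hpsd : Vd.PosSemidef,
      Vd * V = P ∧ (1 - hpsd.sqrt * Vbar * hpsd.sqrt).PosSemidef := by
  have hVbarT : Vbarᵀ = Vbar := by
    rw [← conjTranspose_eq_transpose_of_trivial, hVbar.isHermitian.eq]
  have hPH : Pᴴ = P := by rw [conjTranspose_eq_transpose_of_trivial, hPsymm]
  have hVbarP : Vbar * P = Vbar := by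
    have := congrArg Matrix.transpose hspan
    rwa [transpose_mul, hPsymm, hVbarT] at this
  -- the auxiliary invertible matrix Vbar + 1
  have hpd : (Vbar + 1).PosDef := Matrix.PosDef.posSemidef_add hVbar Matrix.PosDef.one
  set W := (Vbar + 1)⁻¹ with hW
  have hdet : IsUnit (Vbar + 1).det := hpd.det_pos.ne'.isUnit
  have hmul1 : (Vbar + 1) * W = 1 := Matrix.mul_nonsing_inv _ hdet
  have hmul2 : W * (Vbar + 1) = 1 := Matrix.nonsing_inv_mul _ hdet
  have hVP : (Vbar + 1) * P = V := by rw [add_mul, one_mul, hVbarP, hV]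
  have hPV : P * (Vbar + 1) = V := by rw [mul_add, mul_one, hspan, hV]
  have hVW : V * W = P := by rw [← hPV, Matrix.mul_assoc, hmul1, mul_one]
  have hWV : W * V = P := by rw [← hVP, ← Matrix.mul_assoc, hmul2, one_mul]
  have hWP : W * P = P * W := by
    calc W * P = W * (V * W) := by rw [hVW]
      _ = (W * V) * W := by rw [Matrix.mul_assoc]
      _ = P * W := by rw [hWV]
  have hPVeq : P * V = V := by rw [hV, mul_add, hspan, hPidem]
  have hVPeq : V * P = V := by rw [hV, add_mul, hVbarP, hPidem]
  have hVX : V * (P * W) = P := by rw [← Matrix.mul_assoc, hVPeq, hVW]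
  have hXV : (P * W) * V = P := by rw [Matrix.mul_assoc, hWV, hPidem]
  have hmp : IsMoorePenrose V (P * W) := by
    refine ⟨?_, ?_, ?_, ?_⟩
    · rw [hVX, hPVeq]
    · rw [hXV, ← Matrix.mul_assoc, hPidem]
    · rw [hVX, hPsymm]
    · rw [hXV, hPsymm]
  have hVdX : Vd = P * W := mp_unique hVd hmp
  -- Vd is PSD
  have hPWP : P * W * P = P * W := by
    rw [Matrix.mul_assoc, hWP, ← Matrix.mul_assoc, hPidem]
  have hpsd : Vd.PosSemidef := by
    have : (P * W * Pᴴ).PosSemidef := hpd.inv.posSemidef.mul_mul_conjTranspose_same P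
    rwa [hPH, hPWP, ← hVdX] at this
  refine ⟨hpsd, ?_, ?_⟩
  · rw [hVdX, hXV]
  -- the square-root part
  set S := hpsd.sqrt with hS
  have hS2 : S * S = Vd := psd_sqrt_mul_self hpsd
  have hSH : Sᴴ = S := psd_sqrt_herm hpsd
  have hVsymm : Vᵀ = V := by rw [hV, transpose_add, hVbarT, hPsymm]
  have hVdV : V * Vd * V = V := hVd.1
  set M := S * V * S with hM
  have hMH : Mᴴ = M := by
    rw [hM, conjTranspose_mul, conjTranspose_mul, hSH,
      conjTranspose_eq_transpose_of_trivial, hVsymm, Matrix.mul_assoc]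
  have hMidem : M * M = M := by
    calc M * M = S * V * (S * S) * V * S := by simp [hM, Matrix.mul_assoc]
      _ = S * (V * Vd * V) * S := by rw [hS2]; simp [Matrix.mul_assoc]
      _ = M := by rw [hVdV]
  have h1M : (1 - M).PosSemidef := by
    have key : (1 - M)ᴴ * (1 - M) = 1 - M := by
      rw [conjTranspose_sub, conjTranspose_one, hMH, sub_mul, mul_sub, mul_sub,
        one_mul, mul_one, hMidem]
      noncomm_ring
    have := posSemidef_conjTranspose_mul_self (1 - M)
    rwa [key] at this
  have hSPS : (S * P * S).PosSemidef := by
    have := posSemidef_self_mul_conjTranspose (S * P)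
    rwa [conjTranspose_mul, hSH, hPH, Matrix.mul_assoc, ← Matrix.mul_assoc P P S,
      hPidem, ← Matrix.mul_assoc] at this
  have hsplit : 1 - S * Vbar * S = (1 - M) + S * P * S := by
    rw [hM, hV]
    noncomm_ring
  rw [hsplit]
  exact h1M.add hSPS
end
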